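/- (Proposition 2, exact form for integer shape.) Let D be the distance from a uniformly random point of the disk of radius R > 0 (centered at the origin, at height 0) to the point (0,0,h) with h > 0, and let G₁, …, G_l be i.i.d. random variables, independent of D, each with a Gamma distribution of integer shape k ≥ 1 and scale θ > 0. Then for every w > 0, the coverage probability after l code-combining rounds satisfies P(D^{-2} Σ_{i=1}^{l} G_i > w) = (θ/(R² w)) · Σ_{i=0}^{l·k−1} [γ(i+1, (h²+R²)w/θ) − γ(i+1, h² w/θ)] / i!. -/

import Mathlib

open MeasureTheory ProbabilityTheory Real

/-- The closed disk of radius `R` centered at the origin in the plane. -/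
def diskSet (R : ℝ) : Set (ℝ × ℝ) := {p | p.1 ^ 2 + p.2 ^ 2 ≤ R ^ 2}

/-- The uniform probability measure on the closed disk of radius `R`. -/
noncomputable def diskUniform (R : ℝ) : Measure (ℝ × ℝ) :=
  (volume (diskSet R))⁻¹ • volume.restrict (diskSet R)

/-- The Gamma distribution with shape `k` and scale `θ`, given by its density
`x ^ (k-1) * exp (-x/θ) / (Γ k * θ ^ k)` on `(0, ∞)`. -/
noncomputable def gammaScaleMeasure (k θ : ℝ) : Measure ℝ :=
  volume.withDensity fun x =>
    if 0 < x then
      ENNReal.ofReal (x ^ (k - 1) * Real.exp (-x / θ) / (Real.Gamma k * θ ^ k)) else 0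

/-- The lower incomplete gamma function `γ(s, x) = ∫ t in (0, x), t ^ (s-1) * exp (-t)`. -/
noncomputable def lowerGamma (s x : ℝ) : ℝ := ∫ t in (0:ℝ)..x, t ^ (s - 1) * Real.exp (-t)

section Aux
open Filter Set

noncomputable def Ureg (n : ℕ) (t : ℝ) : ℝ :=
  ∑ i ∈ Finset.range n, Real.exp (-t) * t ^ i / i.factorial

/-- Regularized upper incomplete gamma for integer shape. -/

lemma Ureg_nonneg (n : ℕ) {t : ℝ} (ht : 0 ≤ t) : 0 ≤ Ureg n t := by
  apply Finset.sum_nonneg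
  intro i _
  positivity

lemma Ureg_zero (n : ℕ) (hn : 1 ≤ n) : Ureg n 0 = 1 := by
  obtain ⟨m, rfl⟩ := Nat.exists_eq_add_of_le hn
  induction m with
  | zero => simp [Ureg]
  | succ m ih =>
    have := ih (by omega)
    rw [show 1 + (m+1) = (1+m) + 1 by ring, Ureg, Finset.sum_range_succ, ← Ureg, this]
    simp

lemma Ureg_continuous (n : ℕ) : Continuous (Ureg n) := by
  unfold Ureg
  exact continuous_finset_sum _ fun i _ => by fun_prop

lemma Ureg_mono (n m : ℕ) (hnm : n ≤ m) {t : ℝ} (ht : 0 ≤ t) : Ureg n t ≤ Ureg m t := by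
  apply Finset.sum_le_sum_of_subset_of_nonneg (Finset.range_subset_range.2 hnm)
  intro i _ _
  positivity

lemma hasDerivAt_Ureg (n : ℕ) (t : ℝ) :
    HasDerivAt (Ureg (n + 1)) (-(Real.exp (-t) * t ^ n / n.factorial)) t := by
  induction n with
  | zero =>
    have h : HasDerivAt (fun t : ℝ => Real.exp (-t)) (Real.exp (-t) * (-1)) t :=
      (Real.hasDerivAt_exp (-t)).comp t (hasDerivAt_neg t)
    have : Ureg 1 = fun t : ℝ => Real.exp (-t) := by
      funext s; simp [Ureg]
    rw [this]
    simpa using h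
  | succ n ih =>
    have hf : HasDerivAt (fun t : ℝ => Real.exp (-t) * t ^ (n+1) / (n+1).factorial)
        ((Real.exp (-t) * (-1) * t ^ (n+1) + Real.exp (-t) * ((n+1) * t ^ n)) / (n+1).factorial) t := by
      have := (((Real.hasDerivAt_exp (-t)).comp t (hasDerivAt_neg t)).mul
        (hasDerivAt_pow (n+1) t)).div_const ((n+1).factorial : ℝ)
      refine this.congr_deriv (Eq.symm ?_)
      simp only [Function.comp_apply]; push_cast; ring_nf
    have hsum : Ureg (n + 2) = fun t : ℝ =>
        Ureg (n+1) t + Real.exp (-t) * t ^ (n+1) / (n+1).factorial := by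
      funext s; rw [Ureg, Finset.sum_range_succ]; rfl
    rw [hsum]
    refine (ih.add hf).congr_deriv (Eq.symm ?_)
    have hfac : ((n+1).factorial : ℝ) = (n+1) * n.factorial := by
      rw [Nat.factorial_succ]; push_cast; ring
    rw [hfac]
    field_simp [hfac]
    ring

lemma Ureg_tendsto (n : ℕ) : Tendsto (Ureg n) atTop (nhds 0) := by
  have : ∀ i : ℕ, Tendsto (fun t : ℝ => Real.exp (-t) * t ^ i / i.factorial) atTop (nhds 0) := by
    intro i
    have h := tendsto_pow_mul_exp_neg_atTop_nhds_zero i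
    have : (fun t : ℝ => Real.exp (-t) * t ^ i / i.factorial)
        = fun t : ℝ => (t ^ i * Real.exp (-t)) * (i.factorial : ℝ)⁻¹ := by
      funext t; ring
    rw [this]
    simpa using h.mul_const ((i.factorial : ℝ)⁻¹)
  have := tendsto_finset_sum (Finset.range n) (fun i _ => this i)
  simp only [Finset.sum_const_zero] at this
  exact this



section Tail
variable {θ : ℝ} (hθ : 0 < θ)

lemma hasDerivAt_negUreg (n : ℕ) (hθ : 0 < θ) (x : ℝ) :
    HasDerivAt (fun x : ℝ => -Ureg (n+1) (x/θ))
      (x ^ n * Real.exp (-(x/θ)) / (n.factorial * θ ^ (n+1))) x := by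
  have h1 : HasDerivAt (fun x : ℝ => x / θ) (1/θ) x := (hasDerivAt_id x).div_const θ
  have h2 := ((hasDerivAt_Ureg n (x/θ)).comp x h1).neg
  refine h2.congr_deriv (Eq.symm ?_)
  rw [div_pow]
  field_simp
  ring

lemma integrableOn_gpdf (n : ℕ) (hθ : 0 < θ) {a : ℝ} (ha : 0 ≤ a) :
    IntegrableOn (fun x : ℝ => x ^ n * Real.exp (-(x/θ)) / (n.factorial * θ ^ (n+1))) (Ioi a) := by
  apply integrableOn_Ioi_deriv_of_nonneg' (g := fun x : ℝ => -Ureg (n+1) (x/θ))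
    (fun x _ => hasDerivAt_negUreg n hθ x)
  · intro x hx
    have hx0 : 0 < x := lt_of_le_of_lt ha hx
    positivity
  · have : Tendsto (fun x : ℝ => x / θ) atTop atTop := tendsto_id.atTop_div_const hθ
    simpa using ((Ureg_tendsto (n+1)).comp this).neg

lemma integral_gpdf_Ioi (n : ℕ) (hθ : 0 < θ) {a : ℝ} (ha : 0 ≤ a) :
    ∫ x in Ioi a, x ^ n * Real.exp (-(x/θ)) / (n.factorial * θ ^ (n+1)) = Ureg (n+1) (a/θ) := by
  have := integral_Ioi_of_hasDerivAt_of_nonneg' (g := fun x : ℝ => -Ureg (n+1) (x/θ))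
    (fun x _ => hasDerivAt_negUreg n hθ x)
    (fun x hx => by
      have hx0 : 0 < x := lt_of_le_of_lt ha hx
      positivity)
    (by
      have : Tendsto (fun x : ℝ => x / θ) atTop atTop := tendsto_id.atTop_div_const hθ
      simpa using ((Ureg_tendsto (n+1)).comp this).neg)
  simpa using this

lemma gammaScale_apply_Ioi {k : ℕ} (hk : 1 ≤ k) (hθ : 0 < θ) {a : ℝ} (ha : 0 ≤ a) :
    gammaScaleMeasure k θ (Ioi a) = ENNReal.ofReal (Ureg k (a/θ)) := by
  obtain ⟨m, rfl⟩ : ∃ m, k = m + 1 := ⟨k - 1, by omega⟩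
  rw [gammaScaleMeasure, withDensity_apply _ measurableSet_Ioi]
  have hcong : ∀ x ∈ Ioi a,
      (if 0 < x then ENNReal.ofReal (x ^ (((m:ℝ)+1) - 1) * Real.exp (-x / θ)
        / (Real.Gamma ((m:ℝ)+1) * θ ^ ((m:ℝ)+1))) else 0)
      = ENNReal.ofReal (x ^ m * Real.exp (-(x/θ)) / (m.factorial * θ ^ (m+1))) := by
    intro x hx
    have hx0 : 0 < x := lt_of_le_of_lt ha hx
    rw [if_pos hx0]
    congr 1
    rw [Real.Gamma_nat_eq_factorial m]
    rw [show ((m:ℝ)+1) - 1 = (m:ℝ) by ring, Real.rpow_natCast]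
    rw [← Real.rpow_natCast θ (m+1)]
    push_cast
    rw [neg_div]
  simp only [Nat.cast_add, Nat.cast_one]
  rw [setLIntegral_congr_fun measurableSet_Ioi hcong]
  rw [← ofReal_integral_eq_lintegral_ofReal ((integrableOn_gpdf m hθ ha))]
  · rw [integral_gpdf_Ioi m hθ ha]
  · filter_upwards [ae_restrict_mem measurableSet_Ioi] with x hx
    have hx0 : 0 < x := lt_of_le_of_lt ha hx
    positivity

lemma gammaScale_apply_Iic {k : ℝ} (hθ : 0 < θ) :
    gammaScaleMeasure k θ (Iic 0) = 0 := by
  rw [gammaScaleMeasure, withDensity_apply _ measurableSet_Iic]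
  rw [setLIntegral_congr_fun measurableSet_Iic
    ((fun x (hx : x ∈ Iic 0) => if_neg (by simpa using hx)))]
  simp

theorem gammaScale_prob {k : ℕ} (hk : 1 ≤ k) (hθ : 0 < θ) :
    IsProbabilityMeasure (gammaScaleMeasure k θ) := by
  constructor
  have : (univ : Set ℝ) = Iic 0 ∪ Ioi 0 := (Iic_union_Ioi).symm
  rw [this, measure_union (Iic_disjoint_Ioi le_rfl) measurableSet_Ioi,
    gammaScale_apply_Iic hθ, gammaScale_apply_Ioi hk hθ le_rfl, zero_add]
  simp [Ureg_zero k hk]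


lemma beta_nat (q : ℕ) : ∀ (p : ℕ) (b : ℝ),
    ∫ t in (0:ℝ)..b, t ^ p * (b - t) ^ q
      = p.factorial * q.factorial * b ^ (p + q + 1) / (p + q + 1).factorial := by
  induction q with
  | zero =>
    intro p b
    simp only [pow_zero, mul_one, Nat.factorial]
    rw [integral_pow]
    simp only [Nat.succ_eq_add_one]
    push_cast
    have : (0:ℝ) ^ (p+1) = 0 := by simp
    rw [this]
    field_simp
    ring
  | succ q ih =>
    intro p b
    have hu : ∀ t ∈ uIcc (0:ℝ) b, HasDerivAt (fun t : ℝ => (b - t) ^ (q+1))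
        (-((q+1) * (b - t) ^ q)) t := by
      intro t _
      have h1 : HasDerivAt (fun t : ℝ => b - t) (-1) t := by
        exact (hasDerivAt_id' t).const_sub b
      have := (hasDerivAt_pow (q+1) (b - t)).comp t h1
      refine this.congr_deriv (Eq.symm ?_)
      push_cast
      ring
    have hv : ∀ t ∈ uIcc (0:ℝ) b, HasDerivAt (fun t : ℝ => t ^ (p+1) / (p+1)) (t ^ p) t := by
      intro t _
      have := (hasDerivAt_pow (p+1) t).div_const ((p:ℝ)+1)
      refine this.congr_deriv (Eq.symm ?_)
      push_cast
      field_simp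
    have hIu : IntervalIntegrable (fun t : ℝ => -((q+1 : ℝ) * (b - t) ^ q)) volume 0 b :=
      (Continuous.intervalIntegrable (by fun_prop) _ _)
    have hIv : IntervalIntegrable (fun t : ℝ => t ^ p) volume 0 b :=
      (Continuous.intervalIntegrable (by fun_prop) _ _)
    have parts := intervalIntegral.integral_mul_deriv_eq_deriv_mul hu hv hIu hIv
    have hswap : ∫ t in (0:ℝ)..b, t ^ p * (b - t) ^ (q+1)
        = ∫ t in (0:ℝ)..b, (b - t) ^ (q+1) * t ^ p := by
      congr 1; funext t; ring
    rw [hswap, parts]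
    have hIH := ih (p+1) b
    have heq : ∫ t in (0:ℝ)..b, -((q+1 : ℝ) * (b - t) ^ q) * (t ^ (p+1) / (p+1))
        = -(((q:ℝ)+1) / ((p:ℝ)+1)) * ∫ t in (0:ℝ)..b, t ^ (p+1) * (b - t) ^ q := by
      rw [← intervalIntegral.integral_const_mul]
      congr 1; funext t; ring
    rw [heq, hIH]
    simp only [sub_self, ne_eq, zero_pow, pow_succ]
    have e1 : ((p + (q+1) + 1).factorial : ℝ) = (p + q + 2).factorial := by norm_num; ring_nf
    have e2 : ((p + 1 + q + 1).factorial : ℝ) = ((p + q + 2) : ℕ).factorial := by norm_num; ring_nf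
    have hfac1 : ((p+q+2).factorial : ℝ) = (p+q+2) * (p+q+1).factorial := by
      rw [Nat.factorial_succ]; push_cast; ring
    have hfq : ((q+1).factorial : ℝ) = (q+1) * q.factorial := by
      rw [Nat.factorial_succ]; push_cast; ring
    have hfp : ((p+1).factorial : ℝ) = (p+1) * p.factorial := by
      rw [Nat.factorial_succ]; push_cast; ring
    rw [e1, e2, hfq, hfp]
    have hb0 : (0:ℝ) ^ (q+1) = 0 := by simp
    push_cast
    field_simp
    ring


lemma conv_one (n m : ℕ) (b : ℝ) :
    ∫ y in (0:ℝ)..b, y ^ m * Real.exp (-y) / m.factorial * Ureg n (b - y)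
      = Ureg (n + (m+1)) b - Ureg (m+1) b := by
  have hterm : ∀ i : ℕ, (∫ y in (0:ℝ)..b,
      y ^ m * Real.exp (-y) / m.factorial * (Real.exp (-(b - y)) * (b - y) ^ i / i.factorial))
      = Real.exp (-b) * b ^ (m + 1 + i) / (m + 1 + i).factorial := by
    intro i
    have hint : (fun y : ℝ => y ^ m * Real.exp (-y) / m.factorial *
          (Real.exp (-(b-y)) * (b-y) ^ i / i.factorial))
        = fun y => (Real.exp (-b) / (m.factorial * i.factorial)) * (y ^ m * (b - y) ^ i) := by
      funext y
      rw [show Real.exp (-b) = Real.exp (-y) * Real.exp (-(b-y)) by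
        rw [← Real.exp_add]; ring_nf]
      ring
    rw [hint, intervalIntegral.integral_const_mul, beta_nat i m b]
    have h1 : m + i + 1 = m + 1 + i := by ring
    rw [h1]
    have hm : (0:ℝ) < m.factorial := by positivity
    have hi : (0:ℝ) < i.factorial := by positivity
    field_simp
  have hfun : (fun y : ℝ => y ^ m * Real.exp (-y) / m.factorial * Ureg n (b - y))
      = fun y => ∑ i ∈ Finset.range n,
          y ^ m * Real.exp (-y) / m.factorial * (Real.exp (-(b-y)) * (b-y) ^ i / i.factorial) := by
    funext y; rw [Ureg, Finset.mul_sum]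
  rw [hfun, intervalIntegral.integral_finset_sum
    (fun i _ => Continuous.intervalIntegrable (by fun_prop) _ _)]
  simp_rw [hterm]
  rw [show n + (m+1) = (m+1) + n by ring, Ureg, Ureg, Finset.sum_range_add, add_sub_cancel_left]

lemma conv_theta (n m : ℕ) {θ : ℝ} (hθ : 0 < θ) (a : ℝ) :
    ∫ y in (0:ℝ)..a, y ^ m * Real.exp (-(y/θ)) / (m.factorial * θ ^ (m+1)) * Ureg n ((a - y)/θ)
      = Ureg (n + (m+1)) (a/θ) - Ureg (m+1) (a/θ) := by
  have hθ' : θ ≠ 0 := ne_of_gt hθ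
  have hfun : (fun y : ℝ => y ^ m * Real.exp (-(y/θ)) / (m.factorial * θ^(m+1)) * Ureg n ((a-y)/θ))
      = fun y => (fun t : ℝ => θ⁻¹ * (t ^ m * Real.exp (-t) / m.factorial * Ureg n (a/θ - t))) (y/θ) := by
    funext y
    simp only [sub_div]
    generalize Ureg n (a/θ - y/θ) = u
    rw [div_pow]
    field_simp
    try ring
    try exact Or.inl trivial
  rw [hfun, intervalIntegral.integral_comp_div
    (fun t : ℝ => θ⁻¹ * (t ^ m * Real.exp (-t) / ↑m.factorial * Ureg n (a/θ - t))) hθ', zero_div,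
    intervalIntegral.integral_const_mul, smul_eq_mul, ← mul_assoc, mul_inv_cancel₀ hθ', one_mul,
    conv_one n m (a/θ)]



lemma gdens_meas (k θ : ℝ) : Measurable (fun x : ℝ =>
    if 0 < x then
      ENNReal.ofReal (x ^ (k - 1) * Real.exp (-x / θ) / (Real.Gamma k * θ ^ k)) else 0) := by
  apply Measurable.ite measurableSet_Ioi _ measurable_const
  apply Measurable.ennreal_ofReal
  fun_prop

lemma measurableSet_sumgt (l : ℕ) (a : ℝ) : MeasurableSet {x : Fin l → ℝ | a < ∑ i, x i} :=
  measurableSet_lt measurable_const (Finset.measurable_sum _ fun i _ => measurable_pi_apply i)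

lemma gammaScale_ae_pos {k : ℕ} {θ : ℝ} (hθ : 0 < θ) :
    ∀ᵐ y ∂(gammaScaleMeasure k θ), 0 < y := by
  rw [ae_iff]
  convert gammaScale_apply_Iic (k := (k:ℝ)) hθ using 2
  ext y; simp [not_lt]

lemma pi_tail {k : ℕ} (hk : 1 ≤ k) {θ : ℝ} (hθ : 0 < θ) :
    ∀ l : ℕ, 1 ≤ l → ∀ a : ℝ, 0 ≤ a →
      (Measure.pi fun _ : Fin l => gammaScaleMeasure k θ) {x | a < ∑ i, x i}
        = ENNReal.ofReal (Ureg (l * k) (a / θ)) := by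
  haveI : IsProbabilityMeasure (gammaScaleMeasure (k:ℝ) θ) := gammaScale_prob hk hθ
  intro l hl
  induction l, hl using Nat.le_induction with
  | base =>
    intro a ha
    have hmp := measurePreserving_funUnique (gammaScaleMeasure (k:ℝ) θ) (Fin 1)
    have hpre : (MeasurableEquiv.funUnique (Fin 1) ℝ) ⁻¹' (Ioi a)
        = {x : Fin 1 → ℝ | a < ∑ i, x i} := by
      ext x
      simp [MeasurableEquiv.funUnique, Equiv.funUnique, Fin.sum_univ_one]
    rw [← hpre]
    refine (hmp.measure_preimage measurableSet_Ioi.nullMeasurableSet).trans ?_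
    rw [gammaScale_apply_Ioi hk hθ ha, one_mul]
  | succ l hl ih =>
    intro a ha
    set ν := gammaScaleMeasure (k:ℝ) θ with hν
    have hmp := measurePreserving_piFinSuccAbove (fun _ : Fin (l+1) => ν) 0
    set T : Set (ℝ × (Fin l → ℝ)) := {p | a < p.1 + ∑ j, p.2 j} with hTdef
    have hT : MeasurableSet T :=
      measurableSet_lt measurable_const (measurable_fst.add
        ((Finset.measurable_sum _ fun i _ => measurable_pi_apply i).comp measurable_snd))
    have hpre : (MeasurableEquiv.piFinSuccAbove (fun _ : Fin (l+1) => ℝ) 0) ⁻¹' T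
        = {x : Fin (l+1) → ℝ | a < ∑ i, x i} := by
      ext x
      simp [hTdef, MeasurableEquiv.piFinSuccAbove, Fin.sum_univ_succ, Fin.succAbove_zero, Fin.tail]
    rw [← hpre, hmp.measure_preimage hT.nullMeasurableSet, Measure.prod_apply hT]
    have hGmeas : Measurable (fun y : ℝ =>
        if y ≤ a then ENNReal.ofReal (Ureg (l*k) ((a-y)/θ)) else 1) := by
      apply Measurable.ite measurableSet_Iic _ measurable_const
      apply Measurable.ennreal_ofReal
      exact ((Ureg_continuous (l*k)).comp (by fun_prop)).measurable
    have hae : ∀ᵐ y ∂ν, (Measure.pi fun _ : Fin l => ν) (Prod.mk y ⁻¹' T)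
        = (if y ≤ a then ENNReal.ofReal (Ureg (l*k) ((a-y)/θ)) else 1) := by
      filter_upwards [gammaScale_ae_pos hθ] with y hy
      have hpre2 : (Prod.mk y ⁻¹' T) = {z : Fin l → ℝ | a - y < ∑ j, z j} := by
        ext z; simp [hTdef, sub_lt_iff_lt_add']
      rw [hpre2]
      by_cases hya : y ≤ a
      · rw [if_pos hya, ih (a - y) (by linarith)]
      · rw [if_neg hya]
        push_neg at hya
        refine le_antisymm prob_le_one ?_
        have horth : (univ.pi fun _ : Fin l => Ioi (0:ℝ))
            ⊆ {z : Fin l → ℝ | a - y < ∑ j, z j} := by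
          intro z hz
          simp only [Set.mem_pi, mem_univ, forall_true_left, mem_Ioi] at hz
          have : (0:ℝ) ≤ ∑ j, z j := Finset.sum_nonneg fun j _ => (hz j).le
          simp only [mem_setOf_eq]
          linarith
        have : (Measure.pi fun _ : Fin l => ν) (univ.pi fun _ : Fin l => Ioi (0:ℝ)) = 1 := by
          rw [Measure.pi_pi]
          have h0 : ν (Ioi (0:ℝ)) = 1 := by
            rw [hν, gammaScale_apply_Ioi hk hθ le_rfl, zero_div, Ureg_zero k hk,
              ENNReal.ofReal_one]
          simp [h0]
        rw [← this]
        exact measure_mono horth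
    rw [lintegral_congr_ae hae]
    -- split the ν-integral
    rw [← lintegral_add_compl _ measurableSet_Iic (μ := ν), compl_Iic]
    have hIic : ∫⁻ y in Iic 0, (if y ≤ a then ENNReal.ofReal (Ureg (l*k) ((a-y)/θ)) else 1) ∂ν
        = 0 := by
      have : ν.restrict (Iic 0) = 0 := by
        rw [Measure.restrict_eq_zero]; exact gammaScale_apply_Iic hθ
      rw [this, lintegral_zero_measure]
    rw [hIic, zero_add]
    rw [← Ioc_union_Ioi_eq_Ioi ha, lintegral_union measurableSet_Ioi
      (Ioc_disjoint_Ioi le_rfl)]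
    have hB : ∫⁻ y in Ioi a, (if y ≤ a then ENNReal.ofReal (Ureg (l*k) ((a-y)/θ)) else 1) ∂ν
        = ENNReal.ofReal (Ureg k (a/θ)) := by
      rw [setLIntegral_congr_fun measurableSet_Ioi (
        (fun y (hy : y ∈ Ioi a) => if_neg (not_le.2 hy)))]
      rw [setLIntegral_one, hν, gammaScale_apply_Ioi hk hθ ha]
    rw [hB]
    obtain ⟨m, rfl⟩ : ∃ m, k = m + 1 := ⟨k - 1, by omega⟩
    have hA : ∫⁻ y in Ioc 0 a,
        (if y ≤ a then ENNReal.ofReal (Ureg (l*(m+1)) ((a-y)/θ)) else 1) ∂ν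
        = ENNReal.ofReal (Ureg (l*(m+1) + (m+1)) (a/θ) - Ureg (m+1) (a/θ)) := by
      rw [hν, gammaScaleMeasure, restrict_withDensity measurableSet_Ioc,
        lintegral_withDensity_eq_lintegral_mul _ (gdens_meas _ _) hGmeas]
      have hcong : ∀ y ∈ Ioc 0 a,
          ((if 0 < y then ENNReal.ofReal (y ^ (((m:ℕ):ℝ)+1 - 1) * Real.exp (-y / θ)
            / (Real.Gamma (((m:ℕ):ℝ)+1) * θ ^ (((m:ℕ):ℝ)+1))) else 0)
          * (if y ≤ a then ENNReal.ofReal (Ureg (l*(m+1)) ((a-y)/θ)) else 1))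
          = ENNReal.ofReal (y ^ m * Real.exp (-(y/θ)) / (m.factorial * θ ^ (m+1))
              * Ureg (l*(m+1)) ((a-y)/θ)) := by
        intro y hy
        rw [if_pos hy.1, if_pos hy.2, ← ENNReal.ofReal_mul (by
          have h1 : (0:ℝ) < y := hy.1
          positivity)]
        congr 2
        rw [Real.Gamma_nat_eq_factorial m,
          show ((m:ℕ):ℝ) + 1 - 1 = ((m:ℕ):ℝ) by ring, Real.rpow_natCast,
          ← Real.rpow_natCast θ (m+1)]
        push_cast
        rw [neg_div]
      simp only [Pi.mul_apply, Nat.cast_add, Nat.cast_one]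
      rw [setLIntegral_congr_fun measurableSet_Ioc hcong]
      have hint : IntegrableOn (fun y : ℝ =>
          y ^ m * Real.exp (-(y/θ)) / (m.factorial * θ ^ (m+1)) * Ureg (l*(m+1)) ((a-y)/θ))
          (Ioc 0 a) := by
        apply Continuous.integrableOn_Ioc
        exact (by fun_prop : Continuous fun y : ℝ =>
          y ^ m * Real.exp (-(y/θ)) / (m.factorial * θ ^ (m+1))).mul
          ((Ureg_continuous (l*(m+1))).comp (by fun_prop))
      rw [← ofReal_integral_eq_lintegral_ofReal hint]
      · rw [← intervalIntegral.integral_of_le ha, conv_theta (l*(m+1)) m hθ a]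
      · filter_upwards [ae_restrict_mem measurableSet_Ioc] with y hy
        have h1 : (0:ℝ) < y := hy.1
        have h2 : 0 ≤ (a - y)/θ := by
          apply div_nonneg _ hθ.le
          linarith [hy.2]
        have := Ureg_nonneg (l*(m+1)) h2
        positivity
    rw [hA, ← ENNReal.ofReal_add (by
        have h1 := Ureg_mono (m+1) (l*(m+1)+(m+1)) (by omega) (div_nonneg ha hθ.le)
        linarith)
      (Ureg_nonneg _ (div_nonneg ha hθ.le)), sub_add_cancel]
    congr 2
    ring


lemma measurableSet_diskSet (R : ℝ) : MeasurableSet (diskSet R) :=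
  measurableSet_le (by fun_prop) measurable_const

lemma isCompact_diskSet (R : ℝ) : IsCompact (diskSet R) := by
  apply Metric.isCompact_of_isClosed_isBounded
  · exact isClosed_le (by fun_prop) continuous_const
  · apply (Metric.isBounded_Icc ((-|R|, -|R|) : ℝ × ℝ) ((|R|, |R|) : ℝ × ℝ)).subset
    intro p hp
    have h1 : p.1 ^ 2 ≤ R ^ 2 := le_trans (by nlinarith [sq_nonneg p.2]) hp.out
    have h2 : p.2 ^ 2 ≤ R ^ 2 := le_trans (by nlinarith [sq_nonneg p.1]) hp.out
    have h1' : |p.1| ≤ |R| := by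
      rw [← Real.sqrt_sq_eq_abs, ← Real.sqrt_sq_eq_abs]
      exact Real.sqrt_le_sqrt h1
    have h2' : |p.2| ≤ |R| := by
      rw [← Real.sqrt_sq_eq_abs, ← Real.sqrt_sq_eq_abs]
      exact Real.sqrt_le_sqrt h2
    rw [abs_le] at h1' h2'
    exact ⟨⟨h1'.1, h2'.1⟩, ⟨h1'.2, h2'.2⟩⟩

lemma disk_integral (R : ℝ) (hR : 0 < R) (g : ℝ → ℝ) (hg : Continuous g) :
    ∫ p in diskSet R, g (p.1 ^ 2 + p.2 ^ 2) = (2 * π) * ∫ r in (0:ℝ)..R, r * g (r ^ 2) := by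
  have hind : ∫ p in diskSet R, g (p.1 ^ 2 + p.2 ^ 2)
      = ∫ p : ℝ × ℝ, Set.indicator (diskSet R) (fun p : ℝ × ℝ => g (p.1 ^ 2 + p.2 ^ 2)) p :=
    (integral_indicator (measurableSet_diskSet R)).symm
  rw [hind, ← integral_comp_polarCoord_symm]
  have hcong : ∀ p ∈ polarCoord.target,
      p.1 • Set.indicator (diskSet R) (fun p : ℝ × ℝ => g (p.1 ^ 2 + p.2 ^ 2)) (polarCoord.symm p)
      = Set.indicator (Ioc 0 R) (fun r : ℝ => r * g (r ^ 2)) p.1 := by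
    intro p hp
    rw [polarCoord_target] at hp
    have hp1 : 0 < p.1 := hp.1
    have hsq : (polarCoord.symm p).1 ^ 2 + (polarCoord.symm p).2 ^ 2 = p.1 ^ 2 := by
      have : polarCoord.symm p = (p.1 * cos p.2, p.1 * sin p.2) := rfl
      rw [this]
      simp only
      rw [mul_pow, mul_pow, ← mul_add, cos_sq_add_sin_sq, mul_one]
    by_cases hmem : polarCoord.symm p ∈ diskSet R
    · have hle : p.1 ≤ R := by
        have := hmem.out
        rw [hsq] at this
        exact (pow_le_pow_iff_left₀ hp1.le (by linarith) (by norm_num)).1 this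
      rw [Set.indicator_of_mem hmem]
      rw [Set.indicator_of_mem (show p.1 ∈ Ioc 0 R from ⟨hp1, hle⟩)]
      rw [hsq, smul_eq_mul]
    · have hgt : R < p.1 := by
        by_contra hc
        push_neg at hc
        apply hmem
        show (polarCoord.symm p).1 ^ 2 + (polarCoord.symm p).2 ^ 2 ≤ R ^ 2
        rw [hsq]
        exact pow_le_pow_left₀ hp1.le hc 2
      rw [Set.indicator_of_notMem hmem, Set.indicator_of_notMem (fun hc => absurd hc.2 (not_le.2 hgt))]
      simp
  rw [setIntegral_congr_fun polarCoord.open_target.measurableSet hcong]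
  rw [polarCoord_target]
  rw [Measure.volume_eq_prod, ← Measure.prod_restrict]
  have hprod : ∫ p : ℝ × ℝ, Set.indicator (Ioc 0 R) (fun r : ℝ => r * g (r ^ 2)) p.1
      ∂((volume.restrict (Ioi 0)).prod (volume.restrict (Ioo (-π) π)))
      = (∫ r in Ioi (0:ℝ), Set.indicator (Ioc 0 R) (fun r : ℝ => r * g (r ^ 2)) r)
        * ∫ _ in Ioo (-π) π, (1:ℝ) := by
    rw [← integral_prod_mul (f := fun r : ℝ => Set.indicator (Ioc 0 R) (fun r : ℝ => r * g (r ^ 2)) r)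
      (g := fun _ : ℝ => (1:ℝ))]
    simp
  rw [hprod]
  rw [integral_indicator measurableSet_Ioc, Measure.restrict_restrict measurableSet_Ioc]
  have : Ioc (0:ℝ) R ∩ Ioi 0 = Ioc 0 R := by
    rw [inter_eq_left]
    exact Ioc_subset_Ioi_self
  rw [this, setIntegral_const, Real.volume_real_Ioo_of_le (by linarith [Real.pi_pos]), smul_eq_mul, mul_one,
    ← intervalIntegral.integral_of_le hR.le]
  ring

lemma volume_diskSet (R : ℝ) (hR : 0 < R) : volume (diskSet R) = ENNReal.ofReal (π * R ^ 2) := by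
  have h1 : ∫ p in diskSet R, (1:ℝ) = π * R ^ 2 := by
    rw [show (fun _ : ℝ × ℝ => (1:ℝ)) = fun p : ℝ × ℝ => (fun _ : ℝ => (1:ℝ)) (p.1 ^ 2 + p.2 ^ 2) from rfl]
    rw [disk_integral R hR _ continuous_const]
    simp only [mul_one]
    have : ∫ r in (0:ℝ)..R, r = R ^ 2 / 2 := by
      simpa using integral_id (a := (0:ℝ)) (b := R)
    rw [this]
    ring
  rw [setIntegral_const, smul_eq_mul, mul_one, measureReal_def] at h1
  have hfin : volume (diskSet R) ≠ ⊤ := ((isCompact_diskSet R).measure_lt_top).ne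
  rw [← ENNReal.ofReal_toReal hfin, h1]



lemma joint_law {Ω : Type*} [MeasurableSpace Ω] (P : Measure Ω) [IsProbabilityMeasure P]
    {n : ℕ} (f : Fin n → Ω → ℝ) (hm : ∀ i, Measurable (f i))
    (hind : iIndepFun f P) :
    Measure.map (fun ω i => f i ω) P = Measure.pi (fun i => Measure.map (f i) P) := by
  haveI : ∀ i, IsProbabilityMeasure (Measure.map (f i) P) :=
    fun i => Measure.isProbabilityMeasure_map (hm i).aemeasurable
  refine (Measure.pi_eq fun s hs => ?_).symm
  rw [Measure.map_apply (measurable_pi_lambda _ hm) (MeasurableSet.univ_pi hs)]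
  have hpre : (fun ω i => f i ω) ⁻¹' (univ.pi s) = ⋂ i ∈ Finset.univ, f i ⁻¹' s i := by
    ext ω; simp [Set.mem_pi]
  rw [hpre, hind.measure_inter_preimage_eq_mul Finset.univ (fun i _ => hs i)]
  exact Finset.prod_congr rfl fun i _ => (Measure.map_apply (hm i) (hs i)).symm

lemma lowerGamma_diff (i : ℕ) (x0 x1 : ℝ) :
    lowerGamma ((i:ℝ)+1) x1 - lowerGamma ((i:ℝ)+1) x0
      = ∫ t in x0..x1, t ^ i * Real.exp (-t) := by
  unfold lowerGamma
  rw [show ((i:ℝ)+1)-1 = (i:ℝ) by ring]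
  simp_rw [Real.rpow_natCast]
  exact intervalIntegral.integral_interval_sub_left
    (Continuous.intervalIntegrable (by fun_prop) _ _)
    (Continuous.intervalIntegrable (by fun_prop) _ _)

lemma radial (n : ℕ) {w θ hgt R : ℝ} (hθ : 0 < θ) (hw : 0 < w) :
    ∫ r in (0:ℝ)..R, r * Ureg n (w * (r^2 + hgt^2)/θ)
      = θ/(2*w) * ∑ i ∈ Finset.range n,
          (lowerGamma ((i:ℝ)+1) ((hgt^2 + R^2)*w/θ) - lowerGamma ((i:ℝ)+1) (hgt^2*w/θ))
            / i.factorial := by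
  have hterm : ∀ i : ℕ, (∫ r in (0:ℝ)..R,
      r * (Real.exp (-(w * (r^2 + hgt^2)/θ)) * (w * (r^2 + hgt^2)/θ) ^ i / i.factorial))
      = θ/(2*w) * ((lowerGamma ((i:ℝ)+1) ((hgt^2 + R^2)*w/θ)
          - lowerGamma ((i:ℝ)+1) (hgt^2*w/θ)) / i.factorial) := by
    intro i
    have hderiv : ∀ r ∈ uIcc (0:ℝ) R,
        HasDerivAt (fun r : ℝ => w * (r^2 + hgt^2)/θ) (2*w*r/θ) r := by
      intro r _
      have h1 : HasDerivAt (fun r : ℝ => r^2 + hgt^2) (2*r) r := by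
        simpa using ((hasDerivAt_pow 2 r).add_const (hgt^2))
      have : HasDerivAt (fun r : ℝ => w * (r^2 + hgt^2)/θ) (w * (2*r) / θ) r :=
        ((h1.const_mul w).div_const θ)
      convert this using 1
      ring
    have hcv := intervalIntegral.integral_comp_smul_deriv hderiv
      (by fun_prop : Continuous fun r : ℝ => 2*w*r/θ).continuousOn
      (by fun_prop : Continuous fun t : ℝ => Real.exp (-t) * t ^ i / i.factorial)
    have hfun : (fun r : ℝ =>
        r * (Real.exp (-(w * (r^2 + hgt^2)/θ)) * (w * (r^2 + hgt^2)/θ) ^ i / i.factorial))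
        = fun r : ℝ => (θ/(2*w)) • ((2*w*r/θ) •
          ((fun t : ℝ => Real.exp (-t) * t ^ i / i.factorial) ∘ (fun r : ℝ => w * (r^2 + hgt^2)/θ)) r) := by
      funext r
      simp only [smul_eq_mul, Function.comp]
      field_simp
    rw [hfun, intervalIntegral.integral_smul, hcv]
    have h0 : w * ((0:ℝ)^2 + hgt^2)/θ = hgt^2*w/θ := by ring
    have hR : w * (R^2 + hgt^2)/θ = (hgt^2 + R^2)*w/θ := by ring
    rw [h0, hR, smul_eq_mul, lowerGamma_diff]
    rw [intervalIntegral.integral_div]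
    congr 2
    exact intervalIntegral.integral_congr fun t _ => by ring
  have hfun2 : (fun r : ℝ => r * Ureg n (w * (r^2 + hgt^2)/θ))
      = fun r => ∑ i ∈ Finset.range n,
          r * (Real.exp (-(w * (r^2 + hgt^2)/θ)) * (w * (r^2 + hgt^2)/θ) ^ i / i.factorial) := by
    funext r
    rw [Ureg, Finset.mul_sum]
  rw [hfun2, intervalIntegral.integral_finset_sum
    (fun i _ => Continuous.intervalIntegrable (by fun_prop) _ _), Finset.mul_sum]
  exact Finset.sum_congr rfl fun i _ => hterm i
end Tail
end Aux

open Filter Set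

theorem coverage_probability_code_combining (Ω : Type*) [MeasurableSpace Ω] (P : Measure Ω)
    [IsProbabilityMeasure P] (R h θ : ℝ) (l k : ℕ) (hR : 0 < R) (hh : 0 < h)
    (hθ : 0 < θ) (hl : 1 ≤ l) (hk : 1 ≤ k) (D : Ω → ℝ) (G : Fin l → Ω → ℝ)
    (hDm : Measurable D) (hGm : ∀ i, Measurable (G i))
    (hD : Measure.map D P =
      Measure.map (fun p : ℝ × ℝ => Real.sqrt (p.1 ^ 2 + p.2 ^ 2 + h ^ 2)) (diskUniform R))
    (hG : ∀ i, Measure.map (G i) P = gammaScaleMeasure k θ)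
    (hind : iIndepFun (Fin.cons D G : Fin (l + 1) → Ω → ℝ) P)
    (w : ℝ) (hw : 0 < w) :
    P {ω | w < ((D ω) ^ 2)⁻¹ * ∑ i, G i ω} =
      ENNReal.ofReal (θ / (R ^ 2 * w) * ∑ i ∈ Finset.range (l * k),
        (lowerGamma ((i : ℝ) + 1) ((h ^ 2 + R ^ 2) * w / θ) -
          lowerGamma ((i : ℝ) + 1) (h ^ 2 * w / θ)) / (Nat.factorial i)) := by
  have hπ := Real.pi_pos
  haveI hνp : IsProbabilityMeasure (gammaScaleMeasure (k:ℝ) θ) := gammaScale_prob hk hθ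
  set fD : ℝ × ℝ → ℝ := fun p => Real.sqrt (p.1 ^ 2 + p.2 ^ 2 + h ^ 2) with hfD
  have hfDm : Measurable fD := by
    apply Measurable.sqrt
    fun_prop
  set F : Fin (l+1) → Ω → ℝ := Fin.cons D G with hF
  have hFm : ∀ i, Measurable (F i) := by
    intro i
    refine Fin.cases ?_ ?_ i
    · exact hDm
    · exact hGm
  have hμ0 : Measure.map (F 0) P = Measure.map fD (diskUniform R) := by
    rw [hF, Fin.cons_zero]
    exact hD
  have hμs : ∀ j : Fin l, Measure.map (F j.succ) P = gammaScaleMeasure (k:ℝ) θ := by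
    intro j
    rw [hF, Fin.cons_succ]
    exact hG j
  have hjoint := joint_law P F hFm hind
  set S' : Set (Fin (l+1) → ℝ) := {x | w < (x 0 ^ 2)⁻¹ * ∑ j : Fin l, x j.succ} with hS'def
  have hS' : MeasurableSet S' :=
    measurableSet_lt measurable_const
      ((((measurable_pi_apply 0).pow_const 2).inv).mul
        (Finset.measurable_sum _ fun j _ => measurable_pi_apply j.succ))
  have hev : {ω | w < ((D ω) ^ 2)⁻¹ * ∑ i, G i ω} = (fun ω i => F i ω) ⁻¹' S' := by
    ext ω
    simp only [hS'def, mem_preimage, mem_setOf_eq, hF, Fin.cons_zero, Fin.cons_succ]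
  rw [hev, ← Measure.map_apply (measurable_pi_lambda _ hFm) hS', hjoint]
  haveI : ∀ i, IsProbabilityMeasure (Measure.map (F i) P) :=
    fun i => Measure.isProbabilityMeasure_map (hFm i).aemeasurable
  have hmp := measurePreserving_piFinSuccAbove (fun i => Measure.map (F i) P) 0
  set T : Set (ℝ × (Fin l → ℝ)) := {p | w < (p.1 ^ 2)⁻¹ * ∑ j, p.2 j} with hTdef
  have hT : MeasurableSet T :=
    measurableSet_lt measurable_const
      (((measurable_fst.pow_const 2).inv).mul
        ((Finset.measurable_sum _ fun j _ => measurable_pi_apply j).comp measurable_snd))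
  have hpre : (MeasurableEquiv.piFinSuccAbove (fun _ : Fin (l+1) => ℝ) 0) ⁻¹' T = S' := by
    ext x
    simp [hTdef, hS'def, MeasurableEquiv.piFinSuccAbove, Fin.tail, Fin.succAbove_zero]
  rw [← hpre, hmp.measure_preimage hT.nullMeasurableSet]
  have hprodeq : (Measure.map (F 0) P).prod
        (Measure.pi fun j => Measure.map (F ((0 : Fin (l+1)).succAbove j)) P)
      = (Measure.map fD (diskUniform R)).prod
        (Measure.pi fun _ : Fin l => gammaScaleMeasure (k:ℝ) θ) := by
    have htail : (fun j : Fin l => Measure.map (F ((0 : Fin (l+1)).succAbove j)) P)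
        = (fun _ : Fin l => gammaScaleMeasure (k:ℝ) θ) := by
      funext j
      rw [Fin.succAbove_zero]
      exact hμs j
    rw [hμ0, htail]
  rw [hprodeq, Measure.prod_apply hT]
  have haeD : ∀ᵐ d ∂(Measure.map fD (diskUniform R)), h ≤ d := by
    rw [MeasureTheory.ae_map_iff hfDm.aemeasurable measurableSet_Ici]
    refine Filter.Eventually.of_forall fun p => ?_
    show h ≤ Real.sqrt (p.1 ^ 2 + p.2 ^ 2 + h ^ 2)
    calc h = Real.sqrt (h ^ 2) := (Real.sqrt_sq hh.le).symm
      _ ≤ _ := Real.sqrt_le_sqrt (by nlinarith [sq_nonneg p.1, sq_nonneg p.2])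
  have hae2 : ∀ᵐ d ∂(Measure.map fD (diskUniform R)),
      (Measure.pi fun _ : Fin l => gammaScaleMeasure (k:ℝ) θ) (Prod.mk d ⁻¹' T)
        = ENNReal.ofReal (Ureg (l*k) (w * d ^ 2 / θ)) := by
    filter_upwards [haeD] with d hd
    have hd0 : 0 < d := lt_of_lt_of_le hh hd
    have hd2 : 0 < d ^ 2 := pow_pos hd0 2
    have hpre2 : (Prod.mk d ⁻¹' T) = {z : Fin l → ℝ | w * d ^ 2 < ∑ j, z j} := by
      ext z
      simp only [hTdef, mem_preimage, mem_setOf_eq]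
      rw [inv_mul_eq_div, lt_div_iff₀ hd2]
    rw [hpre2, pi_tail hk hθ l hl (w * d ^ 2) (by positivity)]
  rw [lintegral_congr_ae hae2]
  rw [lintegral_map (f := fun d : ℝ => ENNReal.ofReal (Ureg (l*k) (w * d ^ 2 / θ)))
    (Measurable.ennreal_ofReal ((Ureg_continuous (l*k)).measurable.comp (by fun_prop))) hfDm]
  have hsq : (fun p : ℝ × ℝ => ENNReal.ofReal (Ureg (l*k) (w * (fD p) ^ 2 / θ)))
      = fun p : ℝ × ℝ => ENNReal.ofReal (Ureg (l*k) (w * (p.1 ^ 2 + p.2 ^ 2 + h ^ 2) / θ)) := by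
    funext p
    rw [hfD]
    congr 3
    rw [Real.sq_sqrt (by positivity)]
  rw [lintegral_congr (fun p => congrFun hsq p)]
  rw [diskUniform, lintegral_smul_measure, volume_diskSet R hR]
  have hint : IntegrableOn
      (fun p : ℝ × ℝ => Ureg (l*k) (w * (p.1 ^ 2 + p.2 ^ 2 + h ^ 2) / θ)) (diskSet R) :=
    (((Ureg_continuous (l*k)).comp (by fun_prop)).continuousOn).integrableOn_compact
      (isCompact_diskSet R)
  rw [← ofReal_integral_eq_lintegral_ofReal hint
    (Filter.Eventually.of_forall fun p => Ureg_nonneg _ (by positivity))]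
  have hdisk := disk_integral R hR (fun u => Ureg (l*k) (w * (u + h ^ 2) / θ))
      ((Ureg_continuous (l*k)).comp (by fun_prop))
  rw [show (∫ p in diskSet R, Ureg (l*k) (w * (p.1 ^ 2 + p.2 ^ 2 + h ^ 2) / θ))
      = ∫ p in diskSet R, (fun u => Ureg (l*k) (w * (u + h ^ 2) / θ)) (p.1 ^ 2 + p.2 ^ 2) from rfl,
    hdisk]
  rw [radial (l*k) hθ hw]
  have hreal : 2 * π * (θ / (2*w) * ∑ i ∈ Finset.range (l * k),
        (lowerGamma ((i : ℝ) + 1) ((h ^ 2 + R ^ 2) * w / θ) -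
          lowerGamma ((i : ℝ) + 1) (h ^ 2 * w / θ)) / (Nat.factorial i))
      = (π * R ^ 2) * (θ / (R ^ 2 * w) * ∑ i ∈ Finset.range (l * k),
        (lowerGamma ((i : ℝ) + 1) ((h ^ 2 + R ^ 2) * w / θ) -
          lowerGamma ((i : ℝ) + 1) (h ^ 2 * w / θ)) / (Nat.factorial i)) := by
    field_simp
  rw [hreal, ENNReal.ofReal_mul (q := θ / (R ^ 2 * w) * ∑ i ∈ Finset.range (l * k),
        (lowerGamma ((i : ℝ) + 1) ((h ^ 2 + R ^ 2) * w / θ) -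
          lowerGamma ((i : ℝ) + 1) (h ^ 2 * w / θ)) / (Nat.factorial i))
      (show (0:ℝ) ≤ π * R ^ 2 by positivity), smul_eq_mul, ← mul_assoc,
    ENNReal.inv_mul_cancel (ENNReal.ofReal_pos.2 (by positivity)).ne' ENNReal.ofReal_ne_top,
    one_mul]
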